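/- Let R be a commutative ring and G a torsion-free abelian group. An element f = Σ_{x∈G} r_x ε_x of the group-ring R[G] is invertible if and only if the ideal of R generated by {r_x : x ∈ G} is all of R and r_x r_y is nilpotent in R for all x ≠ y. -/

import Mathlib

open Finsupp

private lemma aux_twoUniqueSums {G : Type*} [AddCommGroup G]
    (hG : ∀ (n : ℕ) (x : G), n ≠ 0 → n • x = 0 → x = 0) : TwoUniqueSums G := by
  classical
  set S := nonZeroDivisors ℤ
  letI : Module ℚ (LocalizedModule S G) :=
    Module.compHom _ (FractionRing.algEquiv ℤ ℚ).symm.toRingEquiv.toRingHom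
  let F : AddHom G (LocalizedModule S G) :=
    ⟨fun x => LocalizedModule.mk x 1, fun x y => by
      rw [LocalizedModule.mk_add_mk]; simp⟩
  have hinj : Function.Injective F := by
    intro x y hxy
    have : (LocalizedModule.mk x 1 : LocalizedModule S G) = LocalizedModule.mk y 1 := hxy
    rw [LocalizedModule.mk_eq] at this
    obtain ⟨u, hu⟩ := this
    simp only [one_smul] at hu
    have hsub : (u : ℤ) • (x - y) = 0 := by
      rw [smul_sub, sub_eq_zero]; exact hu
    have hsne : (u : ℤ) ≠ 0 := nonZeroDivisors.coe_ne_zero u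
    have hnat : ((u : ℤ).natAbs : ℤ) • (x - y) = 0 := by
      rcases Int.natAbs_eq (u : ℤ) with h | h
      · rw [← h]; exact hsub
      · have h2 : -((u:ℤ).natAbs : ℤ) • (x - y) = 0 := by rw [← h]; exact hsub
        rw [neg_zsmul, neg_eq_zero] at h2; exact h2
    rw [natCast_zsmul] at hnat
    exact sub_eq_zero.mp (hG (u : ℤ).natAbs (x - y) (Int.natAbs_ne_zero.mpr hsne) hnat)
  exact TwoUniqueSums.of_injective_addHom F hinj inferInstance

private lemma coeff_single' {S : Type*} [Semiring S] {G : Type*} [AddMonoid G]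
    [DecidableEq G] (y x : G) (r : S) :
    (AddMonoidAlgebra.single y r : AddMonoidAlgebra S G).coeff x = if y = x then r else 0 :=
  Finsupp.single_apply

private lemma coeff_add' {S : Type*} [Semiring S] {G : Type*} [AddMonoid G]
    (a b : AddMonoidAlgebra S G) (x : G) : (a + b).coeff x = a.coeff x + b.coeff x := rfl

private lemma isNilpotent_single {R : Type*} [CommRing R] {G : Type*} [AddCommGroup G]
    (y : G) {r : R} (hr : IsNilpotent r) :
    IsNilpotent (AddMonoidAlgebra.single y r : AddMonoidAlgebra R G) := by
  obtain ⟨n, hn⟩ := hr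
  refine ⟨n + 1, ?_⟩
  rw [AddMonoidAlgebra.single_pow, pow_succ, hn, zero_mul]
  exact AddMonoidAlgebra.single_zero _

section MapCoeffs
variable {R S : Type*} [CommRing R] [CommRing S] {G : Type*} [AddCommGroup G]

private noncomputable def mapCoeffs (φ : R →+* S) :
    AddMonoidAlgebra R G →+* AddMonoidAlgebra S G :=
  AddMonoidAlgebra.liftNCRingHom (AddMonoidAlgebra.singleZeroRingHom.comp φ)
    (AddMonoidAlgebra.of S G) fun _ _ => Commute.all _ _

private lemma mapCoeffs_single (φ : R →+* S) (x : G) (r : R) :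
    mapCoeffs φ (AddMonoidAlgebra.single x r) = AddMonoidAlgebra.single x (φ r) := by
  show AddMonoidAlgebra.liftNC _ _ (AddMonoidAlgebra.single x r) = _
  rw [AddMonoidAlgebra.liftNC_single]
  show AddMonoidAlgebra.single 0 (φ r) * AddMonoidAlgebra.single x 1 = _
  rw [AddMonoidAlgebra.single_mul_single, zero_add, mul_one]

private lemma mapCoeffs_apply (φ : R →+* S) (a : AddMonoidAlgebra R G) (x : G) :
    (mapCoeffs φ a).coeff x = φ (a.coeff x) := by
  refine AddMonoidAlgebra.induction (motive := fun a : AddMonoidAlgebra R G => ((mapCoeffs φ) a).coeff x = φ (a.coeff x))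
    a (by simp) ?_
  intro y r b _ _ ih
  classical
  simp only [map_add, coeff_add', Finsupp.add_apply, ih, mapCoeffs_single, coeff_single',
    Finsupp.single_apply, apply_ite φ, map_zero]

private lemma mapCoeffs_surjective (φ : R →+* S) (h : Function.Surjective φ) :
    Function.Surjective (mapCoeffs (G := G) φ) := by
  intro b
  refine AddMonoidAlgebra.induction (motive := fun b : AddMonoidAlgebra S G => ∃ a, mapCoeffs φ a = b)
    b ⟨0, map_zero _⟩ ?_
  rintro y s b _ _ ⟨a, ha⟩
  obtain ⟨r, hr⟩ := h s
  exact ⟨AddMonoidAlgebra.single y r + a, by rw [map_add, mapCoeffs_single, hr, ha]⟩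

end MapCoeffs

private lemma isNilpotent_of_coeffs {R : Type*} [CommRing R] {G : Type*} [AddCommGroup G]
    (a : AddMonoidAlgebra R G) (h : ∀ x, IsNilpotent (a.coeff x)) : IsNilpotent a := by
  revert h
  refine AddMonoidAlgebra.induction
    (motive := fun a : AddMonoidAlgebra R G => (∀ x, IsNilpotent (a.coeff x)) → IsNilpotent a)
    a (fun _ => IsNilpotent.zero) ?_
  intro y r b hyb _ ih h
  have hby : b.coeff y = 0 := Finsupp.notMem_support_iff.mp hyb
  have hr : IsNilpotent r := by
    have hy := h y
    simpa [coeff_add', coeff_single', Finsupp.add_apply, hby] using hy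
  have h1 : IsNilpotent (AddMonoidAlgebra.single y r : AddMonoidAlgebra R G) :=
    isNilpotent_single y hr
  have h2 := ih (fun x => by
    rcases eq_or_ne x y with rfl | hxy
    · rw [show b.coeff x = 0 from hby]; exact IsNilpotent.zero
    · have hx := h x
      simpa [coeff_add', AddMonoidAlgebra.coeff_single, Finsupp.add_apply, Finsupp.single_eq_of_ne' (Ne.symm hxy)] using hx)
  exact (Commute.all (AddMonoidAlgebra.single y r : AddMonoidAlgebra R G) b).isNilpotent_add h1 h2

private lemma isUnit_of_map_unit' {A B : Type*} [CommRing A] [CommRing B] (φ : A →+* B)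
    (hsurj : Function.Surjective φ) (hker : ∀ a, φ a = 0 → IsNilpotent a)
    {a : A} (h : IsUnit (φ a)) : IsUnit a := by
  obtain ⟨u, hu⟩ := h
  obtain ⟨b, hb⟩ := hsurj ((u⁻¹ : Bˣ) : B)
  have hz : φ (a * b - 1) = 0 := by
    rw [map_sub, map_mul, hb, map_one, ← hu, Units.mul_inv, sub_self]
  have hn : IsNilpotent (a * b - 1) := hker _ hz
  have : IsUnit (a * b) := by simpa using hn.isUnit_add_one
  exact isUnit_of_mul_isUnit_left this

private lemma mul_coeff_eq_zero_of_isUnit {K : Type*} [CommRing K] [IsDomain K] {G : Type*}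
    [AddCommGroup G] [TwoUniqueSums G] {u : AddMonoidAlgebra K G} (hu : IsUnit u)
    {x y : G} (hxy : x ≠ y) : u.coeff x * u.coeff y = 0 := by
  classical
  by_contra hne
  have hx : u.coeff x ≠ 0 := fun h => hne (by rw [h, zero_mul])
  have hy : u.coeff y ≠ 0 := fun h => hne (by rw [h, mul_zero])
  obtain ⟨w, hw⟩ := hu.exists_right_inv
  have hwne : w ≠ 0 := by
    rintro rfl
    rw [mul_zero] at hw
    exact zero_ne_one (α := AddMonoidAlgebra K G) hw
  have hxm : x ∈ u.coeff.support := Finsupp.mem_support_iff.mpr hx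
  have hym : y ∈ u.coeff.support := Finsupp.mem_support_iff.mpr hy
  have hwsupp : w.coeff.support.Nonempty :=
    Finsupp.support_nonempty_iff.mpr (fun h => hwne (AddMonoidAlgebra.coeff_eq_zero.mp h))
  have hcard : 1 < u.coeff.support.card * w.coeff.support.card := by
    have h2 : 2 ≤ u.coeff.support.card := Finset.one_lt_card.mpr ⟨x, hxm, y, hym, hxy⟩
    have h1 : 1 ≤ w.coeff.support.card := Finset.card_pos.mpr hwsupp
    calc 1 < 2 * 1 := by norm_num
    _ ≤ u.coeff.support.card * w.coeff.support.card := Nat.mul_le_mul h2 h1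
  obtain ⟨p1, hp1, p2, hp2, hpne, hu1, hu2⟩ := TwoUniqueSums.uniqueAdd_of_one_lt_card hcard
  rw [Finset.mem_product] at hp1 hp2
  have e1 : (u * w).coeff (p1.1 + p1.2) = u.coeff p1.1 * w.coeff p1.2 :=
    AddMonoidAlgebra.coeff_mul_add_of_uniqueAdd hu1
  have e2 : (u * w).coeff (p2.1 + p2.2) = u.coeff p2.1 * w.coeff p2.2 :=
    AddMonoidAlgebra.coeff_mul_add_of_uniqueAdd hu2
  have n1 : u.coeff p1.1 * w.coeff p1.2 ≠ 0 :=
    mul_ne_zero (Finsupp.mem_support_iff.mp hp1.1) (Finsupp.mem_support_iff.mp hp1.2)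
  have n2 : u.coeff p2.1 * w.coeff p2.2 ≠ 0 :=
    mul_ne_zero (Finsupp.mem_support_iff.mp hp2.1) (Finsupp.mem_support_iff.mp hp2.2)
  have z1 : p1.1 + p1.2 = 0 := by
    by_contra hz
    rw [hw] at e1
    have : (1 : AddMonoidAlgebra K G).coeff (p1.1 + p1.2) = 0 := by
      show (AddMonoidAlgebra.single 0 (1:K) : AddMonoidAlgebra K G).coeff (p1.1+p1.2) = 0
      exact Finsupp.single_eq_of_ne' (fun h => hz h.symm)
    exact n1 (by rw [← e1, this])
  have z2 : p2.1 + p2.2 = 0 := by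
    by_contra hz
    rw [hw] at e2
    have : (1 : AddMonoidAlgebra K G).coeff (p2.1 + p2.2) = 0 := by
      show (AddMonoidAlgebra.single 0 (1:K) : AddMonoidAlgebra K G).coeff (p2.1+p2.2) = 0
      exact Finsupp.single_eq_of_ne' (fun h => hz h.symm)
    exact n2 (by rw [← e2, this])
  have : p2 = p1 := by
    have hsum : p2.1 + p2.2 = p1.1 + p1.2 := by rw [z1, z2]
    obtain ⟨ha, hb⟩ := hu1 hp2.1 hp2.2 hsum
    exact Prod.ext ha hb
  exact hpne this.symm

private lemma single_sum' {S : Type*} [Semiring S] {G : Type*} [AddMonoid G] {ι : Type*}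
    (t : Finset ι) (v : ι → S) (y : G) :
    (∑ i ∈ t, AddMonoidAlgebra.single y (v i) : AddMonoidAlgebra S G)
      = AddMonoidAlgebra.single y (∑ i ∈ t, v i) :=
  (map_sum (AddMonoidAlgebra.singleAddHom y) v t).symm

/-- Characterization of the units of a group-ring `R[G]` with `R` a commutative ring and `G`
a torsion-free abelian group: `f = Σ r_x ε_x` is invertible iff the ideal of `R` generated by
the coefficients `r_x` is all of `R` and `r_x * r_y` is nilpotent whenever `x ≠ y`. -/
theorem isUnit_groupRing_iff_coeffs_span_top_and_pairwise_nilpotent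
    {R : Type*} [CommRing R] {G : Type*} [AddCommGroup G]
    (hG : ∀ (n : ℕ) (x : G), n ≠ 0 → n • x = 0 → x = 0)
    (f : AddMonoidAlgebra R G) :
    IsUnit f ↔
      (Ideal.span (Set.range fun x : G => f.coeff x) = ⊤ ∧
        ∀ x y : G, x ≠ y → IsNilpotent (f.coeff x * f.coeff y)) := by
  classical
  haveI : TwoUniqueSums G := aux_twoUniqueSums hG
  constructor
  · intro hu
    constructor
    · by_contra hspan
      obtain ⟨m, hm, hle⟩ := Ideal.exists_le_maximal _ hspan
      haveI := hm
      have hΦf : mapCoeffs (G := G) (Ideal.Quotient.mk m) f = 0 := by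
        refine AddMonoidAlgebra.ext (Finsupp.ext fun x => ?_)
        rw [mapCoeffs_apply]
        show Ideal.Quotient.mk m (f.coeff x) = 0
        rw [Ideal.Quotient.eq_zero_iff_mem]
        exact hle (Ideal.subset_span ⟨x, rfl⟩)
      have h01 := hu.map (mapCoeffs (G := G) (Ideal.Quotient.mk m))
      rw [hΦf, isUnit_zero_iff] at h01
      exact zero_ne_one (α := AddMonoidAlgebra (R ⧸ m) G) h01
    · intro x y hxy
      rw [← mem_nilradical, nilradical_eq_sInf, Submodule.mem_sInf]
      intro p hp
      haveI : Ideal.IsPrime p := hp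
      have hup := hu.map (mapCoeffs (G := G) (Ideal.Quotient.mk p))
      have h0 := mul_coeff_eq_zero_of_isUnit hup hxy
      rw [mapCoeffs_apply, mapCoeffs_apply, ← map_mul,
        Ideal.Quotient.eq_zero_iff_mem] at h0
      exact h0
  · rintro ⟨hspan, hnil⟩
    set N := nilradical R with hN
    set φ := Ideal.Quotient.mk N with hφ
    apply isUnit_of_map_unit' (mapCoeffs (G := G) φ)
      (mapCoeffs_surjective φ Ideal.Quotient.mk_surjective)
      (fun a ha => isNilpotent_of_coeffs a (fun x => by
        have hx : φ (a.coeff x) = 0 := by rw [← mapCoeffs_apply, ha]; rfl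
        rwa [hφ, Ideal.Quotient.eq_zero_iff_mem, hN, mem_nilradical] at hx))
    -- Goal : IsUnit (mapCoeffs φ f)
    have h1 : (1 : R) ∈ Submodule.span R (Set.range fun x : G => f.coeff x) := by
      rw [show Submodule.span R (Set.range fun x : G => f.coeff x)
          = Ideal.span (Set.range fun x : G => f.coeff x) from rfl, hspan]
      exact Submodule.mem_top
    rw [Finsupp.mem_span_range_iff_exists_finsupp] at h1
    obtain ⟨c, hc⟩ := h1
    have horth : ∀ x y : G, x ≠ y → φ (f.coeff x) * φ (f.coeff y) = 0 := fun x y hxy => by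
      rw [← map_mul, hφ, Ideal.Quotient.eq_zero_iff_mem, hN]
      exact mem_nilradical.mpr (hnil x y hxy)
    have hsum : (∑ x ∈ c.support, φ (c x) * φ (f.coeff x)) = 1 := by
      have h := congrArg φ hc
      rw [Finsupp.sum, map_sum, map_one] at h
      simpa only [smul_eq_mul, map_mul] using h
    have key : ∀ x : G, mapCoeffs φ f *
          AddMonoidAlgebra.single (-x) (φ (c x) * φ (c x) * φ (f.coeff x))
        = AddMonoidAlgebra.single (0 : G) ((φ (c x) * φ (f.coeff x)) * (φ (c x) * φ (f.coeff x))) := by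
      intro x
      refine AddMonoidAlgebra.ext (Finsupp.ext fun a => ?_)
      rw [AddMonoidAlgebra.coeff_mul_single_apply, neg_neg, mapCoeffs_apply, coeff_single']
      rcases eq_or_ne a 0 with rfl | ha
      · rw [if_pos rfl, zero_add]
        ring
      · rw [if_neg (Ne.symm ha)]
        have hax : a + x ≠ x := fun h => ha (by simpa using h)
        calc φ (f.coeff (a + x)) * (φ (c x) * φ (c x) * φ (f.coeff x))
            = φ (c x) * φ (c x) * (φ (f.coeff (a + x)) * φ (f.coeff x)) := by ring
          _ = 0 := by rw [horth _ _ hax, mul_zero]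
    have hsq : (∑ x ∈ c.support, (φ (c x) * φ (f.coeff x)) * (φ (c x) * φ (f.coeff x))) = 1 := by
      have expand : ∀ x ∈ c.support, (φ (c x) * φ (f.coeff x)) * (φ (c x) * φ (f.coeff x))
          = ∑ y ∈ c.support, (φ (c x) * φ (f.coeff x)) * (φ (c y) * φ (f.coeff y)) := by
        intro x hx
        rw [Finset.sum_eq_single x (fun y _ hyx => by
            calc (φ (c x) * φ (f.coeff x)) * (φ (c y) * φ (f.coeff y))
                = φ (c x) * φ (c y) * (φ (f.coeff x) * φ (f.coeff y)) := by ring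
              _ = 0 := by rw [horth x y (Ne.symm hyx), mul_zero])
          (fun hx' => absurd hx hx')]
      calc ∑ x ∈ c.support, (φ (c x) * φ (f.coeff x)) * (φ (c x) * φ (f.coeff x))
          = ∑ x ∈ c.support, ∑ y ∈ c.support, (φ (c x) * φ (f.coeff x)) * (φ (c y) * φ (f.coeff y)) :=
            Finset.sum_congr rfl expand
        _ = (∑ x ∈ c.support, φ (c x) * φ (f.coeff x)) * (∑ y ∈ c.support, φ (c y) * φ (f.coeff y)) := by
            rw [← Finset.sum_mul_sum]
        _ = 1 := by rw [hsum, mul_one]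
    have hmul : mapCoeffs φ f
        * (∑ x ∈ c.support, AddMonoidAlgebra.single (-x) (φ (c x) * φ (c x) * φ (f.coeff x))) = 1 := by
      rw [Finset.mul_sum]
      rw [Finset.sum_congr rfl (fun x _ => key x), single_sum', hsq]
      exact AddMonoidAlgebra.one_def.symm
    exact IsUnit.of_mul_eq_one _ hmul
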